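/- arXiv:2508.10722 — 3 statements merged into one kernel-verified Lean document; each statement's English description precedes it below -/
import Mathlib

section
/- Let a < b and Σ ⊆ [a,b] with a, b ∈ Σ and Leb([a,b] \ Σ) = 0. Let g : [a,b] → [0,∞] be Lebesgue measurable with ∫_a^b g < ∞, and fix σ ∈ {0,1} and ε ∈ (0,1). Then there exists a partition a = t_0 < t_1 < … < t_n = b with all t_i ∈ Σ, max_i |t_i − t_{i−1}| < ε, and |Σ_{i=1}^n g(t_{i−σ})(t_i − t_{i−1}) − ∫_a^b g(t) dt| < ε. -/
open MeasureTheory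

set_option maxHeartbeats 2000000 in
/-- Riemann-sum approximation with partition points in a full-measure set:
for `a < b`, `S ⊆ [a,b]` of full measure with `a, b ∈ S`, `g ≥ 0` measurable and integrable
on `[a,b]`, `σ ∈ {0,1}` and `ε ∈ (0,1)`, there is a partition `a = t₀ < ⋯ < tₙ = b` with
all `tᵢ ∈ S`, mesh `< ε`, whose (left/right, according to `σ`) Riemann sum is `ε`-close to
`∫_a^b g`. -/
theorem stmt8 (a b : ℝ) (hab : a < b) (S : Set ℝ) (hS : S ⊆ Set.Icc a b)
    (ha : a ∈ S) (hb : b ∈ S) (hnull : volume (Set.Icc a b \ S) = 0)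
    (g : ℝ → ℝ) (hgm : Measurable g) (hg0 : ∀ t, 0 ≤ g t)
    (hgi : IntegrableOn g (Set.Icc a b))
    (σ : ℕ) (hσ : σ = 0 ∨ σ = 1) (ε : ℝ) (hε : 0 < ε) (hε1 : ε < 1) :
    ∃ (n : ℕ) (t : ℕ → ℝ), 0 < n ∧ t 0 = a ∧ t n = b ∧
      (∀ i ≤ n, t i ∈ S) ∧
      (∀ i j, i < j → j ≤ n → t i < t j) ∧
      (∀ i < n, t (i + 1) - t i < ε) ∧
      |(∑ i ∈ Finset.range n, g (t (i + 1 - σ)) * (t (i + 1) - t i)) -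
          ∫ s in Set.Icc a b, g s| < ε := by
  set L : ℝ := b - a with hLdef
  have hL : 0 < L := by simp [hLdef]; linarith
  set δ : ℝ := ε / 12 with hδdef
  have hδ : 0 < δ := by positivity
  set η : ℝ := ε / (4 * L) with hηdef
  have hη : 0 < η := by positivity
  -- the indicator extension of g
  set f : ℝ → ℝ := (Set.Icc a b).indicator g with hfdef
  have hf : Integrable f volume :=
    (integrable_indicator_iff measurableSet_Icc).2 hgi
  -- continuous approximation
  obtain ⟨φ, φsupp, hφδ, φcont, φint⟩ :=
    hf.exists_hasCompactSupport_integral_sub_le hδ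
  -- ψ = |f - φ| is integrable, nonnegative
  set ψ : ℝ → ℝ := fun x => |f x - φ x| with hψdef
  have hψint : Integrable ψ volume := (hf.sub φint).abs
  have hψ0 : ∀ x, 0 ≤ ψ x := fun x => abs_nonneg _
  have hψtot : ∫ x, ψ x ≤ δ := by
    have : ∀ x, ψ x = ‖f x - φ x‖ := fun x => (Real.norm_eq_abs _).symm
    simpa [this] using hφδ
  -- uniform continuity of φ
  have φuc : UniformContinuous φ := φsupp.uniformContinuous_of_continuous φcont
  obtain ⟨ρ, hρ, hρη⟩ := Metric.uniformContinuous_iff.mp φuc η hη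
  -- constant from endpoint values
  set C : ℝ := |g a - φ a| + |g b - φ b| with hCdef
  have hC0 : 0 ≤ C := by positivity
  -- choice of mesh parameter h
  set h : ℝ := min (min (ρ / 3) (ε / 2)) (min (L / 2) (ε / (8 * (C + 1)))) with hhdef
  have hh : 0 < h := by
    apply lt_min (lt_min (by positivity) (by positivity)) (lt_min (by positivity) (by positivity))
  have hhρ : 2 * h < ρ := by
    have := (min_le_left _ _).trans (min_le_left _ _) (a := h)
    have h1 : h ≤ ρ / 3 := le_trans (min_le_left _ _) (min_le_left _ _)
    linarith
  have hhε : 2 * h ≤ ε := by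
    have h1 : h ≤ ε / 2 := le_trans (min_le_left _ _) (min_le_right _ _)
    linarith
  have hhL : h < L := by
    have h1 : h ≤ L / 2 := le_trans (min_le_right _ _) (min_le_left _ _)
    linarith
  have hhC : 2 * h * C ≤ ε / 4 := by
    have h1 : h ≤ ε / (8 * (C + 1)) := le_trans (min_le_right _ _) (min_le_right _ _)
    have h2 : 0 < 8 * (C + 1) := by positivity
    have h3 : h * (8 * (C + 1)) ≤ ε := by
      rw [← le_div_iff₀ h2] at *; exact h1
    nlinarith [hh.le]
  -- number of grid points
  set K : ℕ := ⌈L / h⌉₊ with hKdef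
  have hK1 : 1 < K := by
    rw [hKdef, Nat.lt_ceil]
    rw [lt_div_iff₀ hh]; push_cast; linarith
  set m : ℕ := K - 1 with hmdef
  have hm1 : 1 ≤ m := by omega
  have hmK : (m : ℝ) + 1 = (K : ℝ) := by
    have : m + 1 = K := by omega
    exact_mod_cast congrArg (Nat.cast : ℕ → ℝ) this
  have hmhL : (m : ℝ) * h < L := by
    have : (m : ℝ) < L / h := by
      rw [← Nat.lt_ceil]; omega
    calc (m : ℝ) * h < (L / h) * h := by
          exact mul_lt_mul_of_pos_right this hh
      _ = L := by field_simp
  have hLm : L ≤ ((m : ℝ) + 1) * h := by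
    rw [hmK]
    have : L / h ≤ (K : ℝ) := Nat.le_ceil _
    calc L = (L / h) * h := by field_simp
      _ ≤ (K : ℝ) * h := mul_le_mul_of_nonneg_right this hh.le
  -- ### Step 1: choose the shift s
  -- bad sets for membership in S
  have hBnull : ∀ j : ℕ, volume ((fun s => a + s + j * h) ⁻¹' (Set.Icc a b \ S)) = 0 := by
    intro j
    have : (fun s : ℝ => a + s + j * h) = (fun s : ℝ => s + (a + j * h)) := by
      funext s; ring
    rw [this, measure_preimage_add_right, hnull]
  have hNnull : volume (⋃ j ∈ Finset.range m,
      ((fun s => a + s + j * h) ⁻¹' (Set.Icc a b \ S))) = 0 := by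
    refine measure_biUnion_null_iff ?_ |>.2 fun j _ => hBnull j
    exact (Finset.range m).countable_toSet
  obtain ⟨N, hNsub, hNmeas, hNvol⟩ := exists_measurable_superset_of_null hNnull
  set T : Set ℝ := Set.Ioo 0 h \ N with hTdef
  have hTmeas : MeasurableSet T := measurableSet_Ioo.diff hNmeas
  have hTvol : volume T = ENNReal.ofReal h := by
    rw [hTdef, measure_diff_null hNvol, Real.volume_Ioo, sub_zero]
  -- membership in S for points of T
  have hTmem : ∀ s ∈ T, ∀ j < m, a + s + j * h ∈ S := by
    intro s hs j hj
    have hs0 : 0 < s := hs.1.1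
    have hsh : s < h := hs.1.2
    have hmem : a + s + j * h ∈ Set.Icc a b := by
      constructor
      · have : 0 ≤ (j : ℝ) * h := by positivity
        linarith
      · have hjm : (j : ℝ) ≤ (m : ℝ) - 1 := by
          have : (j : ℝ) + 1 ≤ (m : ℝ) := by exact_mod_cast hj
          linarith
        have : (j : ℝ) * h ≤ ((m : ℝ) - 1) * h := mul_le_mul_of_nonneg_right hjm hh.le
        have hlt : s + (j : ℝ) * h < (m : ℝ) * h := by nlinarith
        have : a + s + (j : ℝ) * h < a + L := by linarith
        simp only [hLdef] at this; linarith
    by_contra hns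
    have : s ∈ N := hNsub <| Set.mem_biUnion (Finset.mem_coe.mpr (Finset.mem_range.mpr hj)) ⟨hmem, hns⟩
    exact hs.2 this
  -- the grid-sum function G
  set G : ℝ → ℝ := fun s => ∑ j ∈ Finset.range m, ψ (s + (a + j * h)) with hGdef
  have hGint : Integrable G volume := by
    apply integrable_finset_sum
    intro j _
    exact hψint.comp_add_right _
  have hGavg : ∫ s in (0:ℝ)..h, G s ≤ δ := by
    have step1 : ∫ s in (0:ℝ)..h, G s
        = ∑ j ∈ Finset.range m, ∫ s in (0:ℝ)..h, ψ (s + (a + j * h)) := by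
      apply intervalIntegral.integral_finset_sum
      intro j _
      exact (hψint.comp_add_right _).intervalIntegrable
    have step2 : ∀ j ∈ Finset.range m, ∫ s in (0:ℝ)..h, ψ (s + (a + j * h))
        = ∫ x in (a + j * h)..(a + (j + 1) * h), ψ x := by
      intro j _
      rw [intervalIntegral.integral_comp_add_right]
      congr 1 <;> ring
    have step3 : ∑ j ∈ Finset.range m, ∫ x in (a + j * h)..(a + (j + 1) * h), ψ x
        = ∫ x in a..(a + m * h), ψ x := by
      have := intervalIntegral.sum_integral_adjacent_intervals
        (a := fun j : ℕ => a + j * h) (n := m) (f := ψ) (μ := volume)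
        (fun k _ => hψint.intervalIntegrable)
      simpa using this
    have step4 : ∫ x in a..(a + m * h), ψ x ≤ ∫ x, ψ x := by
      rw [intervalIntegral.integral_of_le (by nlinarith : a ≤ a + m * h)]
      exact setIntegral_le_integral hψint (Filter.Eventually.of_forall hψ0)
    rw [step1, Finset.sum_congr rfl step2, step3]
    exact step4.trans hψtot
  -- choose s ∈ T with small G s
  have hexists : ∃ s ∈ T, G s ≤ 2 * δ / h := by
    by_contra hcon
    push_neg at hcon
    have hconst : ∀ s ∈ T, 2 * δ / h ≤ G s := fun s hs => (hcon s hs).le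
    have hlow : (2 * δ / h) * (volume T).toReal ≤ ∫ s in T, G s :=
      setIntegral_ge_of_const_le_real hTmeas (by rw [hTvol]; exact ENNReal.ofReal_ne_top)
        hconst hGint.integrableOn
    have htr : (volume T).toReal = h := by rw [hTvol, ENNReal.toReal_ofReal hh.le]
    have hup : ∫ s in T, G s ≤ ∫ s in Set.Ioo (0:ℝ) h, G s := by
      apply setIntegral_mono_set hGint.integrableOn
      · exact Filter.Eventually.of_forall fun s => Finset.sum_nonneg fun j _ => hψ0 _
      · exact Filter.Eventually.of_forall fun s hs => hs.1
    have heq : ∫ s in Set.Ioo (0:ℝ) h, G s = ∫ s in (0:ℝ)..h, G s := by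
      rw [intervalIntegral.integral_of_le hh.le, integral_Ioc_eq_integral_Ioo]
    have hfin : (2 * δ / h) * h ≤ δ := by
      have h4 : (2 * δ / h) * (volume T).toReal ≤ δ :=
        hlow.trans (hup.trans (heq.trans_le hGavg))
      rwa [htr] at h4
    rw [div_mul_cancel₀ _ hh.ne'] at hfin
    linarith
  obtain ⟨s, hsT, hsG⟩ := hexists
  have hs0 : 0 < s := hsT.1.1
  have hsh : s < h := hsT.1.2
  have hsS : ∀ j < m, a + s + j * h ∈ S := hTmem s hsT
  -- ### Step 2: the partition
  set n : ℕ := m + 1 with hndef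
  set t : ℕ → ℝ := fun i => if i = 0 then a else if i ≤ m then a + s + ((i : ℝ) - 1) * h else b
    with htdef
  have ht0 : t 0 = a := by simp [htdef]
  have htn : t n = b := by simp [htdef, hndef]
  have htj : ∀ i, 1 ≤ i → i ≤ m → t i = a + s + ((i : ℝ) - 1) * h := by
    intro i h1 h2
    simp only [htdef]
    rw [if_neg (by omega), if_pos h2]
  -- t i ∈ [a,b] facts and adjacency
  have hgrid_lt : ∀ i, 1 ≤ i → i ≤ m → a + s + ((i : ℝ) - 1) * h < b := by
    intro i h1 h2
    have him : (i : ℝ) ≤ (m : ℝ) := by exact_mod_cast h2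
    have : ((i : ℝ) - 1) * h ≤ ((m : ℝ) - 1) * h := by nlinarith
    have : s + ((i : ℝ) - 1) * h < (m : ℝ) * h := by nlinarith
    have := hmhL
    simp only [hLdef] at this ⊢; nlinarith
  have hstep : ∀ i < n, t i < t (i + 1) := by
    intro i hi
    rcases Nat.eq_zero_or_pos i with h0 | h1
    · subst h0
      rw [ht0, htj 1 le_rfl hm1]
      push_cast; nlinarith
    · rcases Nat.lt_or_ge i m with h2 | h2
      · rw [htj i h1 h2.le, htj (i + 1) (by omega) (by omega)]
        push_cast; nlinarith
      · have him : i = m := by omega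
        rw [him, htj m hm1 le_rfl, show m + 1 = n from rfl, htn]
        exact hgrid_lt m hm1 le_rfl
  have hmono : ∀ i j, i < j → j ≤ n → t i < t j := by
    intro i j hij hjn
    induction j with
    | zero => omega
    | succ k ih =>
      rcases Nat.lt_succ_iff_lt_or_eq.mp hij with h' | h'
      · exact (ih h' (by omega)).trans (hstep k (by omega))
      · subst h'; exact hstep i (by omega)
  -- gap bounds
  have hgap : ∀ i < n, t (i + 1) - t i ≤ 2 * h ∧ 0 < t (i + 1) - t i := by
    intro i hi
    refine ⟨?_, by linarith [hstep i hi]⟩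
    rcases Nat.eq_zero_or_pos i with h0 | h1
    · subst h0
      rw [ht0, htj 1 le_rfl hm1]; push_cast; nlinarith
    · rcases Nat.lt_or_ge i m with h2 | h2
      · rw [htj i h1 h2.le, htj (i + 1) (by omega) (by omega)]
        push_cast; nlinarith
      · have him : i = m := by omega
        rw [him, htj m hm1 le_rfl, show m + 1 = n from rfl, htn]
        -- b - (a + s + (m-1)h) ≤ 2h since L ≤ (m+1)h
        have := hLm
        simp only [hLdef] at this
        push_cast; nlinarith
  have hgapε : ∀ i < n, t (i + 1) - t i < ε := by
    intro i hi
    rcases Nat.eq_zero_or_pos i with h0 | h1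
    · subst h0
      rw [ht0, htj 1 le_rfl hm1]; push_cast; nlinarith
    · rcases Nat.lt_or_ge i m with h2 | h2
      · rw [htj i h1 h2.le, htj (i + 1) (by omega) (by omega)]
        push_cast; nlinarith
      · have him : i = m := by omega
        rw [him, htj m hm1 le_rfl, show m + 1 = n from rfl, htn]
        have := hLm
        simp only [hLdef] at this
        push_cast; nlinarith
  -- membership in S
  have htS : ∀ i ≤ n, t i ∈ S := by
    intro i hi
    rcases Nat.eq_zero_or_pos i with h0 | h1
    · subst h0; rw [ht0]; exact ha
    · rcases Nat.lt_or_ge i n with h2 | h2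
      · have h2' : i ≤ m := by omega
        rw [htj i h1 h2']
        have := hsS (i - 1) (by omega)
        have hcast : ((i - 1 : ℕ) : ℝ) = (i : ℝ) - 1 := by
          have : 1 ≤ i := h1
          push_cast [Nat.cast_sub this]; ring
        rwa [hcast] at this
      · have : i = n := by omega
        subst this; rw [htn]; exact hb
  -- ### Step 3: the estimate
  refine ⟨n, t, by omega, ht0, htn, htS, hmono, hgapε, ?_⟩
  set Ig : ℝ := ∫ x in Set.Icc a b, g x with hIgdef
  set Iφ : ℝ := ∫ x in Set.Icc a b, φ x with hIφdef
  set Rg : ℝ := ∑ i ∈ Finset.range n, g (t (i + 1 - σ)) * (t (i + 1) - t i) with hRgdef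
  set Rφ : ℝ := ∑ i ∈ Finset.range n, φ (t (i + 1 - σ)) * (t (i + 1) - t i) with hRφdef
  -- (A) |Rg - Rφ| ≤ 2hC + 4δ
  have hA : |Rg - Rφ| ≤ 2 * h * C + 4 * δ := by
    have hterm : ∀ i ∈ Finset.range n,
        |g (t (i + 1 - σ)) * (t (i + 1) - t i) - φ (t (i + 1 - σ)) * (t (i + 1) - t i)|
          ≤ |g (t (i + 1 - σ)) - φ (t (i + 1 - σ))| * (2 * h) := by
      intro i hi
      rw [Finset.mem_range] at hi
      rw [← sub_mul, abs_mul]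
      obtain ⟨h2h, hpos⟩ := hgap i hi
      have : |t (i + 1) - t i| = t (i + 1) - t i := abs_of_pos hpos
      rw [this]
      exact mul_le_mul_of_nonneg_left h2h (abs_nonneg _)
    have h1 : |Rg - Rφ| ≤ ∑ i ∈ Finset.range n,
        |g (t (i + 1 - σ)) - φ (t (i + 1 - σ))| * (2 * h) := by
      rw [hRgdef, hRφdef, ← Finset.sum_sub_distrib]
      exact (Finset.abs_sum_le_sum_abs _ _).trans (Finset.sum_le_sum hterm)
    -- identify the tag sum
    have hgridval : ∀ j < m, |g (t (j + 1)) - φ (t (j + 1))| = ψ (s + (a + j * h)) := by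
      intro j hj
      have := htj (j + 1) (by omega) (by omega)
      have hxval : t (j + 1) = a + s + j * h := by
        rw [this]; push_cast; ring
      have hmem : a + s + j * h ∈ Set.Icc a b :=
        hS (hsS j hj)
      have hfg : f (a + s + j * h) = g (a + s + j * h) := Set.indicator_of_mem hmem g
      rw [hxval]
      simp only [hψdef]
      rw [show s + (a + j * h) = a + s + j * h by ring, hfg]
    rcases hσ with hσ0 | hσ1
    · -- σ = 0 : tags are t (i+1)
      subst hσ0
      have hsum : ∑ i ∈ Finset.range n, |g (t (i + 1 - 0)) - φ (t (i + 1 - 0))| * (2 * h)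
          = (∑ j ∈ Finset.range m, ψ (s + (a + j * h))) * (2 * h)
            + |g b - φ b| * (2 * h) := by
        simp only [Nat.sub_zero]
        rw [hndef, Finset.sum_range_succ, show t (m + 1) = b from htn, Finset.sum_mul]
        congr 1
        exact Finset.sum_congr rfl fun j hj => by
          rw [hgridval j (Finset.mem_range.mp hj)]
      rw [hsum] at h1
      have hGs : (∑ j ∈ Finset.range m, ψ (s + (a + j * h))) ≤ 2 * δ / h := hsG
      have : (∑ j ∈ Finset.range m, ψ (s + (a + j * h))) * (2 * h) ≤ 4 * δ := by
        calc (∑ j ∈ Finset.range m, ψ (s + (a + j * h))) * (2 * h)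
            ≤ (2 * δ / h) * (2 * h) := mul_le_mul_of_nonneg_right hGs (by positivity)
          _ = 4 * δ := by field_simp; ring
      have hCb : |g b - φ b| * (2 * h) ≤ 2 * h * C := by
        rw [hCdef]; nlinarith [abs_nonneg (g a - φ a), abs_nonneg (g b - φ b), hh.le]
      linarith [h1]
    · -- σ = 1 : tags are t i
      subst hσ1
      have hsum : ∑ i ∈ Finset.range n, |g (t (i + 1 - 1)) - φ (t (i + 1 - 1))| * (2 * h)
          = (∑ j ∈ Finset.range m, ψ (s + (a + j * h))) * (2 * h)
            + |g a - φ a| * (2 * h) := by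
        simp only [Nat.add_sub_cancel]
        rw [hndef, Finset.sum_range_succ', ht0, Finset.sum_mul]
        congr 1
        exact Finset.sum_congr rfl fun j hj => by
          rw [hgridval j (Finset.mem_range.mp hj)]
      rw [hsum] at h1
      have hGs : (∑ j ∈ Finset.range m, ψ (s + (a + j * h))) ≤ 2 * δ / h := hsG
      have : (∑ j ∈ Finset.range m, ψ (s + (a + j * h))) * (2 * h) ≤ 4 * δ := by
        calc (∑ j ∈ Finset.range m, ψ (s + (a + j * h))) * (2 * h)
            ≤ (2 * δ / h) * (2 * h) := mul_le_mul_of_nonneg_right hGs (by positivity)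
          _ = 4 * δ := by field_simp; ring
      have hCa : |g a - φ a| * (2 * h) ≤ 2 * h * C := by
        rw [hCdef]; nlinarith [abs_nonneg (g a - φ a), abs_nonneg (g b - φ b), hh.le]
      linarith [h1]
  -- (B) |Rφ - Iφ| ≤ η * L
  have hB : |Rφ - Iφ| ≤ η * L := by
    have hIφsplit : Iφ = ∑ i ∈ Finset.range n, ∫ x in (t i)..(t (i + 1)), φ x := by
      have hsum := intervalIntegral.sum_integral_adjacent_intervals
        (a := t) (n := n) (f := φ) (μ := volume) (fun k _ => φcont.intervalIntegrable _ _)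
      rw [hsum, ht0, htn, intervalIntegral.integral_of_le hab.le, hIφdef,
        integral_Icc_eq_integral_Ioc]
    have hterm : ∀ i ∈ Finset.range n,
        |φ (t (i + 1 - σ)) * (t (i + 1) - t i) - ∫ x in (t i)..(t (i + 1)), φ x|
          ≤ η * (t (i + 1) - t i) := by
      intro i hi
      rw [Finset.mem_range] at hi
      obtain ⟨h2h, hpos⟩ := hgap i hi
      have htag_lo : t i ≤ t (i + 1 - σ) := by
        rcases hσ with h0 | h1
        · subst h0; simp only [Nat.sub_zero]; linarith
        · subst h1; simp only [Nat.add_sub_cancel]; exact le_rfl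
      have htag_hi : t (i + 1 - σ) ≤ t (i + 1) := by
        rcases hσ with h0 | h1
        · subst h0; simp only [Nat.sub_zero]; exact le_rfl
        · subst h1; simp only [Nat.add_sub_cancel]; linarith
      have hconst : φ (t (i + 1 - σ)) * (t (i + 1) - t i)
          = ∫ _ in (t i)..(t (i + 1)), φ (t (i + 1 - σ)) := by
        rw [intervalIntegral.integral_const, smul_eq_mul]; ring
      rw [hconst, ← intervalIntegral.integral_sub (intervalIntegrable_const)
        (φcont.intervalIntegrable _ _)]
      have hbound : ∀ x ∈ Set.uIoc (t i) (t (i + 1)),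
          ‖φ (t (i + 1 - σ)) - φ x‖ ≤ η := by
        intro x hx
        rw [Set.uIoc_of_le (by linarith)] at hx
        have hd : dist (t (i + 1 - σ)) x < ρ := by
          rw [Real.dist_eq, abs_lt]
          constructor <;> [nlinarith [hx.1, hx.2]; nlinarith [hx.1, hx.2]]
        have := hρη hd
        rw [Real.dist_eq] at this
        rw [Real.norm_eq_abs]
        exact this.le
      have := intervalIntegral.norm_integral_le_of_norm_le_const hbound
      rw [Real.norm_eq_abs] at this
      have habs : |t (i + 1) - t i| = t (i + 1) - t i := abs_of_pos hpos
      rw [habs] at this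
      exact this
    have h1 : |Rφ - Iφ| ≤ ∑ i ∈ Finset.range n, η * (t (i + 1) - t i) := by
      rw [hRφdef, hIφsplit, ← Finset.sum_sub_distrib]
      exact (Finset.abs_sum_le_sum_abs _ _).trans (Finset.sum_le_sum hterm)
    have h2 : ∑ i ∈ Finset.range n, η * (t (i + 1) - t i) = η * L := by
      rw [← Finset.mul_sum, Finset.sum_range_sub (fun i => t i), ht0, htn]
    linarith [h1, h2.le, h2.ge]
  -- (C) |Iφ - Ig| ≤ δ
  have hC : |Iφ - Ig| ≤ δ := by
    have hsub : Iφ - Ig = ∫ x in Set.Icc a b, (φ x - g x) := by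
      rw [hIφdef, hIgdef, integral_sub (φcont.integrableOn_Icc) hgi]
    rw [hsub]
    have h1 : |∫ x in Set.Icc a b, (φ x - g x)| ≤ ∫ x in Set.Icc a b, |φ x - g x| := by
      simpa [Real.norm_eq_abs] using
        norm_integral_le_integral_norm (μ := volume.restrict (Set.Icc a b))
          (f := fun x => φ x - g x)
    have h2 : ∫ x in Set.Icc a b, |φ x - g x| = ∫ x in Set.Icc a b, ψ x := by
      apply setIntegral_congr_fun measurableSet_Icc
      intro x hx
      simp only [hψdef, hfdef]
      rw [Set.indicator_of_mem hx g, abs_sub_comm]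
    have h3 : ∫ x in Set.Icc a b, ψ x ≤ ∫ x, ψ x :=
      setIntegral_le_integral hψint (Filter.Eventually.of_forall hψ0)
    linarith [h1, h2.le, h2.ge, h3, hψtot]
  -- combine
  have : |Rg - Ig| ≤ 2 * h * C + 4 * δ + η * L + δ := by
    have := abs_sub_le Rg Rφ Ig
    have := abs_sub_le Rφ Iφ Ig
    calc |Rg - Ig| ≤ |Rg - Rφ| + |Rφ - Ig| := abs_sub_le _ _ _
      _ ≤ |Rg - Rφ| + (|Rφ - Iφ| + |Iφ - Ig|) := by linarith [abs_sub_le Rφ Iφ Ig]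
      _ ≤ 2 * h * C + 4 * δ + η * L + δ := by linarith [hA, hB, hC]
  have hηL : η * L = ε / 4 := by
    rw [hηdef]; field_simp [hL.ne']
  calc |Rg - Ig| ≤ 2 * h * C + 4 * δ + η * L + δ := this
    _ ≤ ε / 4 + 4 * (ε / 12) + ε / 4 + ε / 12 := by
        rw [hηL, hδdef]; linarith [hhC]
    _ < ε := by linarith
end

section
/- Γ-limsup (recovery sequence): In the setting of the penalised energies E_ε above, for every (u, z) with u ∈ H¹(Ω) of mean m and z = K(u), the sequence (u, K_ε(u)) satisfies (u, K_ε(u)) → (u, K(u)) in (H¹_av(Ω))* × L²(Ω) and E_ε(u, K_ε(u)) = ∫_Ω (½|∇u|² + F(u)) dx for all ε, hence limsup_ε E_ε(u, K_ε(u)) ≤ E_0(u, z). -/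
open MeasureTheory Filter
open scoped ENNReal Classical

/-- Membership in `H¹(Ω)` with prescribed mean `m` (smooth representative encoding):
differentiable with `u, ∇u ∈ L²(Ω)` and `⨍_Ω u = m`. -/
def inH1m (d : ℕ) (Ω : Set (EuclideanSpace ℝ (Fin d))) (m : ℝ)
    (u : EuclideanSpace ℝ (Fin d) → ℝ) : Prop :=
  Differentiable ℝ u ∧ MemLp u 2 (volume.restrict Ω) ∧
    MemLp (fun x => ‖fderiv ℝ u x‖) 2 (volume.restrict Ω) ∧
    (⨍ x in Ω, u x ∂volume) = m

/-- The Ginzburg–Landau (Cahn–Hilliard) energy `∫_Ω (½|∇u|² + F(u))`. -/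
noncomputable def CHen (d : ℕ) (Ω : Set (EuclideanSpace ℝ (Fin d))) (F : ℝ → ℝ)
    (u : EuclideanSpace ℝ (Fin d) → ℝ) : ℝ :=
  ∫ x in Ω, ((1 / 2) * ‖fderiv ℝ u x‖ ^ 2 + F (u x))

/-- The penalised energy `E_ε(u,z) = ∫_Ω(½|∇u|² + F(u)) + (1/2ε²)∫_Ω (z - K_ε(u))²`,
`+∞` away from `(H¹ mean-m) × L²`. -/
noncomputable def Eeps (d : ℕ) (Ω : Set (EuclideanSpace ℝ (Fin d))) (m : ℝ) (F : ℝ → ℝ)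
    (ε : ℝ) (Kε : ℝ → ℝ) (u z : EuclideanSpace ℝ (Fin d) → ℝ) : ℝ≥0∞ :=
  if inH1m d Ω m u ∧ MemLp z 2 (volume.restrict Ω) then
    ENNReal.ofReal (CHen d Ω F u +
      (1 / (2 * ε ^ 2)) * ∫ x in Ω, (z x - Kε (u x)) ^ 2)
  else ⊤

/-- The limit energy: `E₀(u,z) = ∫_Ω(½|∇u|² + F(u))` if `z = K(u)` (a.e.) and `u ∈ H¹`
with mean `m`, `+∞` otherwise. -/
noncomputable def Ezero (d : ℕ) (Ω : Set (EuclideanSpace ℝ (Fin d))) (m : ℝ) (F : ℝ → ℝ)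
    (K : ℝ → ℝ) (u z : EuclideanSpace ℝ (Fin d) → ℝ) : ℝ≥0∞ :=
  if inH1m d Ω m u ∧ (∀ᵐ x ∂(volume.restrict Ω), z x = K (u x)) then
    ENNReal.ofReal (CHen d Ω F u)
  else ⊤

/-- The `(H¹_av(Ω))*` norm of `w`, realised as the supremum of `∫_Ω w φ` over mean-zero
`C¹` test functions with Dirichlet norm at most one. -/
noncomputable def dualNormAv (d : ℕ) (Ω : Set (EuclideanSpace ℝ (Fin d)))
    (w : EuclideanSpace ℝ (Fin d) → ℝ) : ℝ :=
  ⨆ φ : {φ : EuclideanSpace ℝ (Fin d) → ℝ //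
      ContDiff ℝ 1 φ ∧ (∫ x in Ω, φ x) = 0 ∧ (∫ x in Ω, ‖fderiv ℝ φ x‖ ^ 2) ≤ 1},
    ∫ x in Ω, w x * φ.1 x


/-- Γ-limsup / recovery sequence: for `u ∈ H¹(Ω)` of mean `m` and
`z = K(u)`, the recovery pairs `(u, K_ε(u))` converge to `(u, K(u))` in
`(H¹_av(Ω))* × L²(Ω)`, have `E_ε(u, K_ε(u)) = ∫_Ω(½|∇u|² + F(u))`, and hence the limsup
of their energies is at most `E₀(u, z)`. -/
theorem stmt15 (d : ℕ) (hd : 1 ≤ d) (hd3 : d ≤ 3)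
    (Ω : Set (EuclideanSpace ℝ (Fin d))) (hΩo : IsOpen Ω) (hΩne : Ω.Nonempty)
    (hΩb : Bornology.IsBounded Ω) (hΩc : Convex ℝ Ω)
    (m : ℝ) (F : ℝ → ℝ) (hF : ContDiff ℝ 2 F) (hF0 : ∀ s, 0 ≤ F s)
    (c p : ℝ) (hc : 0 < c) (hp : 1 ≤ p) (hp3 : d = 3 → p ≤ 5)
    (hFgrowth : ∀ s, |F s| ≤ c * (|s| ^ (p + 1) + 1))
    (Astar Atop : ℝ) (hAs : 0 < Astar) (hAt : Astar ≤ Atop)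
    (A : ℕ → ℝ → ℝ) (Al : ℝ → ℝ) (hAc : ∀ k, Continuous (A k)) (hAlc : Continuous Al)
    (hAb : ∀ k s, Astar ≤ A k s ∧ A k s ≤ Atop)
    (hAconv : TendstoUniformly A Al atTop)
    (ε : ℕ → ℝ) (hε : ∀ k, 0 < ε k ∧ ε k < 1) (hε0 : Tendsto ε atTop (nhds 0))
    (u : EuclideanSpace ℝ (Fin d) → ℝ) (hu : inH1m d Ω m u) :
    Tendsto (fun k =>
        eLpNorm (fun x => (∫ t in (0:ℝ)..(u x), A k t) - ∫ t in (0:ℝ)..(u x), Al t) 2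
          (volume.restrict Ω)) atTop (nhds 0) ∧
    (∀ k, Eeps d Ω m F (ε k) (fun s => ∫ t in (0:ℝ)..s, A k t) u
        (fun x => ∫ t in (0:ℝ)..(u x), A k t) = ENNReal.ofReal (CHen d Ω F u)) ∧
    limsup (fun k =>
        Eeps d Ω m F (ε k) (fun s => ∫ t in (0:ℝ)..s, A k t) u
          (fun x => ∫ t in (0:ℝ)..(u x), A k t)) atTop ≤
      Ezero d Ω m F (fun s => ∫ t in (0:ℝ)..s, Al t) u
        (fun x => ∫ t in (0:ℝ)..(u x), Al t) := by
  have hAtop : (0:ℝ) < Atop := hAs.trans_le hAt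
  -- Membership of the recovery sequence in L²
  have hzmem : ∀ k, MemLp (fun x => ∫ t in (0:ℝ)..(u x), A k t) 2 (volume.restrict Ω) := by
    intro k
    have hcont : Continuous fun x => ∫ t in (0:ℝ)..(u x), A k t :=
      (intervalIntegral.continuous_primitive (fun a b => (hAc k).intervalIntegrable a b)
        0).comp hu.1.continuous
    refine MemLp.of_le (hu.2.1.const_mul Atop) hcont.aestronglyMeasurable
      (ae_of_all _ fun x => ?_)
    have hb : ‖∫ t in (0:ℝ)..(u x), A k t‖ ≤ Atop * |u x - 0| := by
      apply intervalIntegral.norm_integral_le_of_norm_le_const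
      intro t ht
      rw [Real.norm_eq_abs, abs_of_pos (hAs.trans_le (hAb k t).1)]
      exact (hAb k t).2
    simpa [Real.norm_eq_abs, abs_mul, abs_of_pos hAtop] using hb
  -- Part 2: the energies are exactly the Cahn–Hilliard energy
  have key : ∀ k, Eeps d Ω m F (ε k) (fun s => ∫ t in (0:ℝ)..s, A k t) u
      (fun x => ∫ t in (0:ℝ)..(u x), A k t) = ENNReal.ofReal (CHen d Ω F u) := by
    intro k
    rw [Eeps, if_pos ⟨hu, hzmem k⟩]
    simp
  refine ⟨?_, key, ?_⟩
  · -- Part 1: L² convergence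
    rw [ENNReal.tendsto_nhds_zero]
    intro δ hδ
    rcases eq_top_or_lt_top δ with rfl | hδt
    · exact Eventually.of_forall fun k => le_top
    set C := eLpNorm u 2 (volume.restrict Ω) with hCdef
    have hC : C ≠ ⊤ := hu.2.1.2.ne
    have hC0 : (0:ℝ) ≤ C.toReal := ENNReal.toReal_nonneg
    set η := δ.toReal / (C.toReal + 1) with hηdef
    have hηpos : 0 < η :=
      div_pos (ENNReal.toReal_pos hδ.ne' hδt.ne) (by linarith)
    filter_upwards [Metric.tendstoUniformly_iff.1 hAconv η hηpos] with k hk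
    have hbd : ∀ x, ‖(∫ t in (0:ℝ)..(u x), A k t) - ∫ t in (0:ℝ)..(u x), Al t‖
        ≤ ‖η * u x‖ := by
      intro x
      have hint1 : IntervalIntegrable (A k) volume 0 (u x) :=
        (hAc k).intervalIntegrable _ _
      have hint2 : IntervalIntegrable Al volume 0 (u x) :=
        hAlc.intervalIntegrable _ _
      rw [← intervalIntegral.integral_sub hint1 hint2]
      have hb : ‖∫ t in (0:ℝ)..(u x), (A k t - Al t)‖ ≤ η * |u x - 0| := by
        apply intervalIntegral.norm_integral_le_of_norm_le_const
        intro t ht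
        rw [Real.norm_eq_abs, abs_sub_comm]
        exact le_of_lt (by simpa [Real.dist_eq] using hk t)
      calc ‖∫ t in (0:ℝ)..(u x), (A k t - Al t)‖ ≤ η * |u x - 0| := hb
        _ = ‖η * u x‖ := by
            rw [Real.norm_eq_abs, abs_mul, abs_of_pos hηpos, sub_zero]
    calc eLpNorm (fun x => (∫ t in (0:ℝ)..(u x), A k t) - ∫ t in (0:ℝ)..(u x), Al t) 2
          (volume.restrict Ω)
        ≤ eLpNorm (fun x => η * u x) 2 (volume.restrict Ω) := eLpNorm_mono hbd
      _ = ‖η‖₊ * C := by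
          rw [hCdef]
          exact eLpNorm_const_smul η u 2 (volume.restrict Ω)
      _ = ENNReal.ofReal η * ENNReal.ofReal C.toReal := by
          rw [ENNReal.ofReal_toReal hC, ← enorm_eq_nnnorm, Real.enorm_eq_ofReal hηpos.le]
      _ = ENNReal.ofReal (η * C.toReal) := (ENNReal.ofReal_mul hηpos.le).symm
      _ ≤ ENNReal.ofReal δ.toReal := by
          apply ENNReal.ofReal_le_ofReal
          rw [hηdef, div_mul_eq_mul_div, div_le_iff₀ (by linarith)]
          nlinarith [ENNReal.toReal_nonneg (a := δ)]
      _ = δ := ENNReal.ofReal_toReal hδt.ne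
  · -- Part 3: limsup bound
    rw [Ezero, if_pos ⟨hu, ae_of_all _ fun x => rfl⟩]
    calc limsup (fun k => Eeps d Ω m F (ε k) (fun s => ∫ t in (0:ℝ)..s, A k t) u
            (fun x => ∫ t in (0:ℝ)..(u x), A k t)) atTop
        = limsup (fun _ : ℕ => ENNReal.ofReal (CHen d Ω F u)) atTop := by
          simp only [key]
      _ = ENNReal.ofReal (CHen d Ω F u) := limsup_const _
      _ ≤ ENNReal.ofReal (CHen d Ω F u) := le_rfl
end

section
/- Let H be a real separable Hilbert space and S_n : H → P(H*) set-valued maps for n ∈ ℕ ∪ {∞} such that S_∞(x) is closed and convex for every x, and such that for every subsequence: x_{n_k} → x strongly, y_{n_k} ∈ S_{n_k}(x_{n_k}), y_{n_k} ⇀ y weakly implies y ∈ S_∞(x). Then the evolutionary closedness holds: if x_n → x_∞ in L²(0,T;H), y_n ⇀ y_∞ in L²(0,T;H*), and y_n(t) ∈ S_n(x_n(t)) for a.e. t and all n, then y_∞(t) ∈ S_∞(x_∞(t)) for a.e. t ∈ (0,T). -/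
open MeasureTheory Filter
open scoped RealInnerProductSpace ENNReal

section Helpers

lemma aemeas_liminf'' {α : Type*} [MeasurableSpace α] {μ : Measure α} {f : ℕ → α → ℝ≥0∞}
    (h : ∀ i, AEMeasurable (f i) μ) :
    AEMeasurable (fun t => liminf (fun i => f i t) atTop) μ := by
  refine ⟨fun t => liminf (fun i => (h i).mk _ t) atTop,
    Measurable.liminf (fun i => (h i).measurable_mk), ?_⟩
  filter_upwards [ae_all_iff.2 fun i => (h i).ae_eq_mk] with t ht
  have : (fun i => f i t) = fun i => (h i).mk _ t := funext ht
  rw [this]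

lemma reindex_sum {ι : Type*} {M : Type*} [AddCommMonoid M] (tt : Finset ι) (G : ι → M) :
    ∑ l ∈ Finset.range tt.card,
      (if h : l < tt.card then G ((tt.equivFin.symm ⟨l, h⟩) : ι) else 0) = ∑ i ∈ tt, G i := by
  rw [Finset.sum_range, ← Finset.sum_coe_sort tt G,
    ← Equiv.sum_comp tt.equivFin.symm (fun s => G (s : ι))]
  apply Fintype.sum_congr
  intro l
  rw [dif_pos l.isLt, Fin.eta]

lemma Lp_coeFn_sum {α E : Type*} [MeasurableSpace α] {μ : Measure α} [NormedAddCommGroup E]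
    {ι : Type*} (s : Finset ι) (F : ι → Lp E 2 μ) :
    (↑↑(∑ i ∈ s, F i) : α → E) =ᵐ[μ] fun a => ∑ i ∈ s, (F i : α → E) a := by
  classical
  induction s using Finset.cons_induction with
  | empty =>
      simp only [Finset.sum_empty]
      exact Lp.coeFn_zero E 2 μ
  | cons i s his ih =>
      rw [Finset.sum_cons]
      filter_upwards [Lp.coeFn_add (F i) (∑ j ∈ s, F j), ih] with a h1 h2
      rw [h1, Pi.add_apply, h2, Finset.sum_cons]

variable {H : Type*} [NormedAddCommGroup H] [InnerProductSpace ℝ H]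

lemma bc_ae_tendsto {α : Type*} [MeasurableSpace α] {μ : Measure α}
    (v : ℕ → α → H) (g : α → H)
    (hm : ∀ i, AEMeasurable (fun t => ‖v i t - g t‖) μ)
    (hint : ∀ i, ∫⁻ t, ENNReal.ofReal (‖v i t - g t‖ ^ 2) ∂μ ≤ ENNReal.ofReal ((1/2) ^ i)) :
    ∀ᵐ t ∂μ, Tendsto (fun i => v i t) atTop (nhds (g t)) := by
  set F : ℕ → α → ℝ≥0∞ := fun i t => ENNReal.ofReal (‖v i t - g t‖ ^ 2) with hF
  have hFm : ∀ i, AEMeasurable (F i) μ := fun i =>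
    ENNReal.measurable_ofReal.comp_aemeasurable ((hm i).pow_const 2)
  have htsum : ∑' i, ∫⁻ t, F i t ∂μ ≠ ⊤ := by
    refine ne_top_of_le_ne_top ?_ (ENNReal.tsum_le_tsum fun i => hint i)
    have h2 : ∀ i : ℕ, ENNReal.ofReal ((1/2 : ℝ) ^ i) = (ENNReal.ofReal (1/2)) ^ i := by
      intro i; rw [ENNReal.ofReal_pow (by norm_num)]
    simp_rw [h2]
    rw [ENNReal.tsum_geometric]
    have hlt : (ENNReal.ofReal (1/2)) < 1 := by
      rw [show (1 : ℝ≥0∞) = ENNReal.ofReal 1 by simp]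
      exact (ENNReal.ofReal_lt_ofReal_iff (by norm_num)).2 (by norm_num)
    simp only [ne_eq, ENNReal.inv_eq_top, tsub_eq_zero_iff_le]
    exact fun hcon => absurd hcon (not_le.2 hlt)
  have hae : ∀ᵐ t ∂μ, (∑' i, F i t) < ⊤ := by
    refine ae_lt_top' (AEMeasurable.ennreal_tsum hFm) ?_
    rw [lintegral_tsum hFm]; exact htsum
  filter_upwards [hae] with t ht
  have h0 : Tendsto (fun i => F i t) atTop (nhds 0) :=
    ENNReal.tendsto_atTop_zero_of_tsum_ne_top ht.ne
  have h1 : Tendsto (fun i => ‖v i t - g t‖ ^ 2) atTop (nhds 0) := by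
    have h1' := (ENNReal.tendsto_toReal (by simp : (0:ℝ≥0∞) ≠ ⊤)).comp h0
    have heq : (ENNReal.toReal ∘ fun i => F i t) = fun i => ‖v i t - g t‖ ^ 2 := by
      funext i
      simp only [Function.comp, hF, ENNReal.toReal_ofReal (sq_nonneg _)]
    rw [heq] at h1'
    simpa using h1'
  have h2 : Tendsto (fun i => ‖v i t - g t‖) atTop (nhds 0) := by
    have h2' := (Real.continuous_sqrt.tendsto 0).comp h1
    have heq : ((fun x => Real.sqrt x) ∘ fun i => ‖v i t - g t‖ ^ 2) = fun i => ‖v i t - g t‖ := by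
      funext i
      simp only [Function.comp, Real.sqrt_sq (norm_nonneg _)]
    rw [heq] at h2'
    simpa using h2'
  exact tendsto_iff_norm_sub_tendsto_zero.2 h2

variable [CompleteSpace H] [SecondCountableTopology H]

lemma weak_seq_compact (b : ℕ → H) (R : ℝ) (hb : ∀ k, ‖b k‖ ≤ R) :
    ∃ (σ : ℕ → ℕ) (z : H), StrictMono σ ∧
      ∀ w : H, Tendsto (fun k => ⟪b (σ k), w⟫) atTop (nhds ⟪z, w⟫) := by
  haveI : Nonempty H := ⟨0⟩
  have hR0 : 0 ≤ R := le_trans (norm_nonneg _) (hb 0)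
  set e : ℕ → H := TopologicalSpace.denseSeq H with he
  have hdense : DenseRange e := TopologicalSpace.denseRange_denseSeq H
  set s : Set (ℕ → ℝ) := Set.univ.pi (fun j => Set.Icc (-(R * ‖e j‖)) (R * ‖e j‖)) with hs
  have hscomp : IsCompact s := isCompact_univ_pi (fun j => isCompact_Icc)
  set u : ℕ → (ℕ → ℝ) := fun k j => ⟪b k, e j⟫ with hu
  have hmem : ∀ k, u k ∈ s := by
    intro k
    rw [hs, Set.mem_univ_pi]
    intro j
    have h1 : |⟪b k, e j⟫| ≤ ‖b k‖ * ‖e j‖ := abs_real_inner_le_norm _ _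
    have h2 : ‖b k‖ * ‖e j‖ ≤ R * ‖e j‖ :=
      mul_le_mul_of_nonneg_right (hb k) (norm_nonneg _)
    constructor
    · linarith [(abs_le.1 (h1.trans h2)).1]
    · exact (abs_le.1 (h1.trans h2)).2
  obtain ⟨a, -, σ, hσ, hconv⟩ := hscomp.tendsto_subseq hmem
  have hcoord : ∀ j, Tendsto (fun k => ⟪b (σ k), e j⟫) atTop (nhds (a j)) := by
    intro j
    exact (continuous_apply j).continuousAt.tendsto.comp hconv
  have hcau : ∀ w : H, ∃ L, Tendsto (fun k => ⟪b (σ k), w⟫) atTop (nhds L) := by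
    intro w
    refine cauchySeq_tendsto_of_complete ?_
    rw [Metric.cauchySeq_iff]
    intro ε hε
    obtain ⟨j, hj⟩ := hdense.exists_dist_lt w (show (0:ℝ) < ε / (4 * (R + 1)) by positivity)
    have hwj : ‖w - e j‖ < ε / (4 * (R + 1)) := by
      rw [← dist_eq_norm]; exact hj
    have hcj := hcoord j
    rw [Metric.tendsto_atTop] at hcj
    obtain ⟨N, hN⟩ := hcj (ε / 4) (by positivity)
    refine ⟨N, fun m hm n hn => ?_⟩
    have key : ∀ p q : ℕ, p ≥ N → q ≥ N →
        |⟪b (σ p), w⟫ - ⟪b (σ q), w⟫| < ε := by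
      intro p q hp hq
      have h1 : |⟪b (σ p), e j⟫ - a j| < ε / 4 := by
        have := hN p hp; rwa [Real.dist_eq] at this
      have h2 : |⟪b (σ q), e j⟫ - a j| < ε / 4 := by
        have := hN q hq; rwa [Real.dist_eq] at this
      have h3 : ∀ r : ℕ, |⟪b (σ r), w⟫ - ⟪b (σ r), e j⟫| ≤ R * (ε / (4 * (R + 1))) := by
        intro r
        have : ⟪b (σ r), w⟫ - ⟪b (σ r), e j⟫ = ⟪b (σ r), w - e j⟫ := by
          rw [inner_sub_right]
        rw [this]
        refine le_trans (abs_real_inner_le_norm _ _) ?_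
        exact mul_le_mul (hb _) (le_of_lt hwj) (norm_nonneg _) hR0
      have hRe : R * (ε / (4 * (R + 1))) ≤ ε / 4 := by
        have hpos : (0:ℝ) < 4 * (R + 1) := by linarith
        rw [show R * (ε / (4 * (R + 1))) = (R * ε) / (4 * (R + 1)) by ring,
          div_le_div_iff₀ hpos (by norm_num : (0:ℝ) < 4)]
        nlinarith [hε.le, hR0]
      have e1 : |⟪b (σ p), w⟫ - ⟪b (σ q), w⟫| ≤
          |⟪b (σ p), w⟫ - ⟪b (σ p), e j⟫| + |⟪b (σ p), e j⟫ - a j|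
          + |⟪b (σ q), e j⟫ - a j| + |⟪b (σ q), w⟫ - ⟪b (σ q), e j⟫| := by
        have t1 := abs_sub_le (⟪b (σ p), w⟫) (⟪b (σ p), e j⟫) (⟪b (σ q), w⟫)
        have t2 := abs_sub_le (⟪b (σ p), e j⟫) (a j) (⟪b (σ q), w⟫)
        have t3 := abs_sub_le (a j) (⟪b (σ q), e j⟫) (⟪b (σ q), w⟫)
        have t4 : |a j - ⟪b (σ q), e j⟫| = |⟪b (σ q), e j⟫ - a j| := abs_sub_comm _ _
        have t5 : |⟪b (σ q), e j⟫ - ⟪b (σ q), w⟫| = |⟪b (σ q), w⟫ - ⟪b (σ q), e j⟫| :=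
          abs_sub_comm _ _
        linarith
      have h9 := h3 p
      have h10 := h3 q
      linarith
    have := key m n hm hn
    rwa [Real.dist_eq]
  choose L hL using hcau
  have hLadd : ∀ w w' : H, L (w + w') = L w + L w' := by
    intro w w'
    refine tendsto_nhds_unique ?_ ((hL w).add (hL w'))
    have : (fun k => ⟪b (σ k), w + w'⟫) = fun k => ⟪b (σ k), w⟫ + ⟪b (σ k), w'⟫ := by
      funext k; rw [inner_add_right]
    rw [← this]; exact hL _
  have hLsmul : ∀ (c : ℝ) (w : H), L (c • w) = c * L w := by
    intro c w
    refine tendsto_nhds_unique ?_ ((hL w).const_mul c)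
    have : (fun k => ⟪b (σ k), c • w⟫) = fun k => c * ⟪b (σ k), w⟫ := by
      funext k; rw [real_inner_smul_right]
    rw [← this]; exact hL _
  have hLbound : ∀ w : H, ‖L w‖ ≤ R * ‖w‖ := by
    intro w
    have h1 : ∀ k, |⟪b (σ k), w⟫| ≤ R * ‖w‖ := fun k =>
      le_trans (abs_real_inner_le_norm _ _)
        (mul_le_mul_of_nonneg_right (hb _) (norm_nonneg _))
    have h2 : Tendsto (fun k => |⟪b (σ k), w⟫|) atTop (nhds |L w|) := (hL w).abs
    have := le_of_tendsto h2 (Eventually.of_forall h1)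
    simpa [Real.norm_eq_abs] using this
  let ℓ : H →ₗ[ℝ] ℝ :=
    { toFun := L
      map_add' := hLadd
      map_smul' := by intro c w; simp [hLsmul] }
  let ℓc : H →L[ℝ] ℝ := LinearMap.mkContinuous ℓ R hLbound
  set z : H := (InnerProductSpace.toDual ℝ H).symm ℓc with hz
  refine ⟨σ, z, hσ, fun w => ?_⟩
  have hzw : ⟪z, w⟫ = L w := by
    have h3 : (InnerProductSpace.toDual ℝ H) z = ℓc := by
      rw [hz]; exact (InnerProductSpace.toDual ℝ H).apply_symm_apply ℓc
    have h2 : ((InnerProductSpace.toDual ℝ H) z) w = ⟪z, w⟫ :=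
      InnerProductSpace.toDual_apply_apply
    rw [h3] at h2
    exact h2.symm
  rw [hzw]; exact hL w

end Helpers

set_option maxHeartbeats 2000000 in
/-- static strong–weak closedness upgrades to evolutionary closedness:
let `H` be a real separable Hilbert space (identified with its dual) and
`S_n : H → P(H)` (`n ∈ ℕ`), `S_∞ : H → P(H)` with `S_∞(x)` closed and convex; assume the
subsequential static closedness: along any subsequence, `x_k → x` strongly,
`y_k ∈ S_{n_k}(x_k)`, `y_k ⇀ y` weakly imply `y ∈ S_∞(x)`.  Then: if `x_n → x_∞` in
`L²(0,T;H)`, `y_n ⇀ y_∞` in `L²(0,T;H)` and `y_n(t) ∈ S_n(x_n(t))` a.e., it follows that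
`y_∞(t) ∈ S_∞(x_∞(t))` for a.e. `t ∈ (0,T)`. -/
theorem stmt17 {H : Type*} [NormedAddCommGroup H] [InnerProductSpace ℝ H]
    [CompleteSpace H] [SecondCountableTopology H]
    (T : ℝ) (hT : 0 < T)
    (S : ℕ → H → Set H) (Sinf : H → Set H)
    (hclosed : ∀ x, IsClosed (Sinf x)) (hconv : ∀ x, Convex ℝ (Sinf x))
    (hstatic : ∀ φ : ℕ → ℕ, StrictMono φ →
      ∀ (x y : ℕ → H) (xl yl : H),
        (∀ k, y k ∈ S (φ k) (x k)) →
        Tendsto x atTop (nhds xl) →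
        (∀ w : H, Tendsto (fun k => ⟪y k, w⟫) atTop (nhds ⟪yl, w⟫)) →
        yl ∈ Sinf xl)
    (x y : ℕ → ℝ → H) (xl yl : ℝ → H)
    (hxm : ∀ n, AEStronglyMeasurable (x n) (volume.restrict (Set.Ioc 0 T)))
    (hym : ∀ n, AEStronglyMeasurable (y n) (volume.restrict (Set.Ioc 0 T)))
    (hxlm : AEStronglyMeasurable xl (volume.restrict (Set.Ioc 0 T)))
    (hylm : AEStronglyMeasurable yl (volume.restrict (Set.Ioc 0 T)))
    (hx2 : ∀ n, IntegrableOn (fun t => ‖x n t‖ ^ 2) (Set.Ioc 0 T))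
    (hy2 : ∀ n, IntegrableOn (fun t => ‖y n t‖ ^ 2) (Set.Ioc 0 T))
    (hxl2 : IntegrableOn (fun t => ‖xl t‖ ^ 2) (Set.Ioc 0 T))
    (hyl2 : IntegrableOn (fun t => ‖yl t‖ ^ 2) (Set.Ioc 0 T))
    (hstrong : Tendsto (fun n => ∫ t in Set.Ioc (0:ℝ) T, ‖x n t - xl t‖ ^ 2) atTop
      (nhds 0))
    (hweak : ∀ w : ℝ → H, AEStronglyMeasurable w (volume.restrict (Set.Ioc 0 T)) →
      IntegrableOn (fun t => ‖w t‖ ^ 2) (Set.Ioc 0 T) →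
      Tendsto (fun n => ∫ t in Set.Ioc (0:ℝ) T, ⟪y n t, w t⟫) atTop
        (nhds (∫ t in Set.Ioc (0:ℝ) T, ⟪yl t, w t⟫)))
    (hincl : ∀ n, ∀ᵐ t ∂(volume.restrict (Set.Ioc (0:ℝ) T)), y n t ∈ S n (x n t)) :
    ∀ᵐ t ∂(volume.restrict (Set.Ioc (0:ℝ) T)), yl t ∈ Sinf (xl t) := by
  classical
  set μ : Measure ℝ := volume.restrict (Set.Ioc 0 T) with hμdef
  -- Memℒp facts and Lp elements
  have hYm : ∀ n, MemLp (y n) 2 μ := fun n =>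
    (memLp_two_iff_integrable_sq_norm (hym n)).2 (hy2 n)
  have hYlm : MemLp yl 2 μ := (memLp_two_iff_integrable_sq_norm hylm).2 hyl2
  have hXm : ∀ n, MemLp (x n) 2 μ := fun n =>
    (memLp_two_iff_integrable_sq_norm (hxm n)).2 (hx2 n)
  have hXlm : MemLp xl 2 μ := (memLp_two_iff_integrable_sq_norm hxlm).2 hxl2
  set Y : ℕ → Lp H 2 μ := fun n => (hYm n).toLp (y n) with hYdef
  set Yl : Lp H 2 μ := hYlm.toLp yl with hYldef
  have hYcoe : ∀ n, ((Y n : Lp H 2 μ) : ℝ → H) =ᵐ[μ] y n := fun n => (hYm n).coeFn_toLp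
  have hYlcoe : ((Yl : Lp H 2 μ) : ℝ → H) =ᵐ[μ] yl := hYlm.coeFn_toLp
  have hnormsq : ∀ (F : Lp H 2 μ), ∫ t, ‖(F : ℝ → H) t‖ ^ 2 ∂μ = ‖F‖ ^ 2 := by
    intro F
    rw [← real_inner_self_eq_norm_sq, L2.inner_def]
    exact integral_congr_ae (Eventually.of_forall fun a =>
      (real_inner_self_eq_norm_sq _).symm)
  -- weak convergence in Lp
  have hWconv : ∀ W : Lp H 2 μ,
      Tendsto (fun n => (inner ℝ (Y n) W : ℝ)) atTop (nhds (inner ℝ Yl W)) := by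
    intro W
    have hWm := Lp.aestronglyMeasurable W
    have hW2 : Integrable (fun t => ‖(W : ℝ → H) t‖ ^ 2) μ :=
      (memLp_two_iff_integrable_sq_norm hWm).1 (Lp.memLp W)
    have h := hweak (fun t => (W : ℝ → H) t) hWm hW2
    have e1 : ∀ n, (inner ℝ (Y n) W : ℝ) = ∫ t, ⟪y n t, (W : ℝ → H) t⟫ ∂μ := by
      intro n
      rw [L2.inner_def]
      refine integral_congr_ae ?_
      filter_upwards [hYcoe n] with t ht
      rw [ht]
    have e2 : (inner ℝ Yl W : ℝ) = ∫ t, ⟪yl t, (W : ℝ → H) t⟫ ∂μ := by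
      rw [L2.inner_def]
      refine integral_congr_ae ?_
      filter_upwards [hYlcoe] with t ht
      rw [ht]
    simp_rw [e1, e2]
    exact h
  -- uniform L² bound via Banach–Steinhaus
  obtain ⟨C, hC0, hC⟩ : ∃ C : ℝ, 0 ≤ C ∧ ∀ n, ∫ t, ‖y n t‖ ^ 2 ∂μ ≤ C := by
    have hpt : ∀ W : Lp H 2 μ, ∃ c, ∀ n : ℕ, ‖(innerSL ℝ (Y n)) W‖ ≤ c := by
      intro W
      obtain ⟨c, hc⟩ := (hWconv W).abs.bddAbove_range
      refine ⟨c, fun n => ?_⟩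
      have := hc (Set.mem_range_self n)
      simpa [innerSL_apply_apply, Real.norm_eq_abs] using this
    obtain ⟨C', hC'⟩ := banach_steinhaus hpt
    refine ⟨C' ^ 2 ⊔ 0, le_max_right _ _, fun n => ?_⟩
    have h1 : ‖Y n‖ ≤ C' := by
      rw [← innerSL_apply_norm ℝ (Y n)]; exact hC' n
    have h2 : ∫ t, ‖y n t‖ ^ 2 ∂μ = ‖Y n‖ ^ 2 := by
      rw [← hnormsq (Y n)]
      refine integral_congr_ae ?_
      filter_upwards [hYcoe n] with t ht
      rw [ht]
    rw [h2]
    have h3 : ‖Y n‖ ^ 2 ≤ C' ^ 2 := by nlinarith [norm_nonneg (Y n)]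
    exact le_trans h3 (le_max_left _ _)
  -- subsequence with a.e. strong convergence of x
  obtain ⟨φ₀, hφ₀, hφ₀x⟩ : ∃ φ₀ : ℕ → ℕ, StrictMono φ₀ ∧
      ∀ n, (∫ t, ‖x (φ₀ n) t - xl t‖ ^ 2 ∂μ) < (1/2) ^ n := by
    exact extraction_forall_of_eventually
      (P := fun n kk => (∫ t, ‖x kk t - xl t‖ ^ 2 ∂μ) < (1/2) ^ n)
      (fun n => hstrong.eventually_lt_const (by positivity))
  have hdiffint : ∀ n, Integrable (fun t => ‖x n t - xl t‖ ^ 2) μ := fun n =>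
    (memLp_two_iff_integrable_sq_norm ((hxm n).sub hxlm)).1 ((hXm n).sub hXlm)
  have hxae : ∀ᵐ t ∂μ, Tendsto (fun kk => x (φ₀ kk) t) atTop (nhds (xl t)) := by
    apply bc_ae_tendsto
    · intro i; exact ((hxm (φ₀ i)).sub hxlm).norm.aemeasurable
    · intro i
      rw [← ofReal_integral_eq_lintegral_ofReal (hdiffint (φ₀ i))
        (Eventually.of_forall fun t => sq_nonneg _)]
      exact ENNReal.ofReal_le_ofReal (hφ₀x i).le
  -- Mazur: convex combinations of tails converge strongly
  have hMaz : ∀ (m : ℕ) (ε : ℝ), 0 < ε → ∃ (N : ℕ) (k : ℕ → ℕ) (w : ℕ → ℝ),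
      (∀ l, l < N → m ≤ k l) ∧ (∀ l, 0 ≤ w l) ∧ (∑ l ∈ Finset.range N, w l = 1) ∧
      Integrable (fun t => ‖(∑ l ∈ Finset.range N, w l • y (φ₀ (k l)) t) - yl t‖ ^ 2) μ ∧
      (∫ t, ‖(∑ l ∈ Finset.range N, w l • y (φ₀ (k l)) t) - yl t‖ ^ 2 ∂μ) < ε := by
    intro m ε hε
    set D : Set (Lp H 2 μ) := Set.range (fun j : ℕ => Y (φ₀ (j + m))) with hD
    have hYlmem : Yl ∈ closure (convexHull ℝ D) := by
      by_contra hnot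
      obtain ⟨f, u, hfu, hub⟩ := geometric_hahn_banach_point_closed
        ((convex_convexHull ℝ D).closure) isClosed_closure hnot
      set W : Lp H 2 μ := (InnerProductSpace.toDual ℝ (Lp H 2 μ)).symm f with hW
      have hfW : ∀ Z : Lp H 2 μ, f Z = (inner ℝ Z W : ℝ) := by
        intro Z
        have h2 : (InnerProductSpace.toDual ℝ (Lp H 2 μ)) W = f :=
          (InnerProductSpace.toDual ℝ (Lp H 2 μ)).apply_symm_apply f
        have h1 : ((InnerProductSpace.toDual ℝ (Lp H 2 μ)) W) Z = inner ℝ W Z :=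
          InnerProductSpace.toDual_apply_apply
        rw [h2] at h1
        rw [h1, real_inner_comm]
      have hmono : StrictMono (fun j : ℕ => φ₀ (j + m)) :=
        hφ₀.comp (fun a b hab => by omega)
      have hconv2 : Tendsto (fun j => f (Y (φ₀ (j + m)))) atTop (nhds (f Yl)) := by
        simp_rw [hfW]
        exact (hWconv W).comp hmono.tendsto_atTop
      have hge : u ≤ f Yl := ge_of_tendsto hconv2 (Eventually.of_forall fun j =>
        (hub _ (subset_closure (subset_convexHull ℝ D ⟨j, rfl⟩))).le)
      exact absurd hfu (not_lt.2 hge)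
    obtain ⟨V, hVmem, hVdist⟩ := Metric.mem_closure_iff.1 hYlmem (Real.sqrt ε)
      (Real.sqrt_pos.2 hε)
    rw [convexHull_eq] at hVmem
    obtain ⟨ι, tt, wgt, zf, hw0, hw1, hzD, hcm⟩ := hVmem
    have hJex : ∀ i : ι, ∃ j : ℕ, i ∈ tt → Y (φ₀ (j + m)) = zf i := by
      intro i
      by_cases h : i ∈ tt
      · obtain ⟨j, hj⟩ := hzD i h
        exact ⟨j, fun _ => hj⟩
      · exact ⟨0, fun h' => absurd h' h⟩
    choose J hJ using hJex
    set N : ℕ := tt.card with hN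
    set eq := tt.equivFin with heq
    set kf : ℕ → ℕ := fun l => if h : l < N then J ((eq.symm ⟨l, h⟩ : {a // a ∈ tt}) : ι) + m
      else m with hkf
    set wf : ℕ → ℝ := fun l => if h : l < N then wgt ((eq.symm ⟨l, h⟩ : {a // a ∈ tt}) : ι)
      else 0 with hwf
    have hwfsum : ∑ l ∈ Finset.range N, wf l = 1 := by
      rw [show ∑ l ∈ Finset.range N, wf l = ∑ i ∈ tt, wgt i from reindex_sum tt wgt]
      exact hw1
    have hptwise : ∀ τ : ℝ, ∑ l ∈ Finset.range N, wf l • y (φ₀ (kf l)) τ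
        = ∑ i ∈ tt, wgt i • y (φ₀ (J i + m)) τ := by
      intro τ
      rw [← reindex_sum tt (fun i => wgt i • y (φ₀ (J i + m)) τ)]
      apply Finset.sum_congr rfl
      intro l hl
      have hlN : l < N := Finset.mem_range.1 hl
      rw [hwf, hkf]
      simp only [dif_pos hlN]
      simp only [dif_pos (show l < tt.card from hlN), heq]
    have hVeq : V = ∑ i ∈ tt, wgt i • zf i := by
      rw [← hcm]
      exact Finset.centerMass_eq_of_sum_1 tt zf hw1
    have hVae : (V : ℝ → H) =ᵐ[μ] fun τ => ∑ l ∈ Finset.range N, wf l • y (φ₀ (kf l)) τ := by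
      have h2 : (V : ℝ → H) =ᵐ[μ] fun a => ∑ i ∈ tt, ((wgt i • zf i : Lp H 2 μ) : ℝ → H) a := by
        rw [hVeq]; exact Lp_coeFn_sum tt _
      have h3 : ∀ᵐ τ ∂μ, ∀ i ∈ (tt : Set ι), ((wgt i • zf i : Lp H 2 μ) : ℝ → H) τ
          = wgt i • y (φ₀ (J i + m)) τ := by
        rw [MeasureTheory.ae_ball_iff tt.countable_toSet]
        intro i hi
        have hi' : i ∈ tt := hi
        filter_upwards [Lp.coeFn_smul (wgt i) (zf i), hYcoe (φ₀ (J i + m))] with τ ha hb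
        rw [ha, Pi.smul_apply, ← hJ i hi', hb]
      filter_upwards [h2, h3] with τ h2τ h3τ
      rw [h2τ, hptwise τ]
      exact Finset.sum_congr rfl fun i hi => h3τ i (Finset.mem_coe.2 hi)
    refine ⟨N, kf, wf, ?_, ?_, hwfsum, ?_, ?_⟩
    · intro l hl
      simp only [hkf]
      split <;> omega
    · intro l
      simp only [hwf]
      split
      · exact hw0 _ (Subtype.mem _)
      · exact le_refl 0
    · -- integrability
      have hvmem : MemLp (fun τ => ∑ l ∈ Finset.range N, wf l • y (φ₀ (kf l)) τ) 2 μ :=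
        memLp_finset_sum (Finset.range N)
          (f := fun l τ => wf l • y (φ₀ (kf l)) τ)
          (fun l _ => (hYm (φ₀ (kf l))).const_smul (wf l))
      exact (memLp_two_iff_integrable_sq_norm
        (hvmem.sub hYlm).aestronglyMeasurable).1 (hvmem.sub hYlm)
    · -- distance bound
      have h4 : ∫ t, ‖(∑ l ∈ Finset.range N, wf l • y (φ₀ (kf l)) t) - yl t‖ ^ 2 ∂μ
          = ‖V - Yl‖ ^ 2 := by
        rw [← hnormsq (V - Yl)]
        refine integral_congr_ae ?_
        filter_upwards [hVae, hYlcoe, Lp.coeFn_sub V Yl] with t h1 h2 h3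
        rw [h3, Pi.sub_apply, h1, h2]
      rw [h4]
      have h5 : ‖V - Yl‖ < Real.sqrt ε := by
        rw [← dist_eq_norm, dist_comm]
        exact hVdist
      nlinarith [norm_nonneg (V - Yl), Real.sq_sqrt hε.le, Real.sqrt_nonneg ε]
  -- choose convex combinations for each i
  choose Nc kc wc hkc hwc0 hwc1 hvint hvdist using fun i => hMaz i ((1/2) ^ i) (by positivity)
  set v : ℕ → ℝ → H := fun i τ => ∑ l ∈ Finset.range (Nc i), wc i l • y (φ₀ (kc i l)) τ
    with hvdef
  have hvm : ∀ i, AEStronglyMeasurable (v i) μ := fun i =>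
    Finset.aestronglyMeasurable_fun_sum _ (fun l _ => ((hym (φ₀ (kc i l))).const_smul (wc i l)))
  have hvae : ∀ᵐ τ ∂μ, Tendsto (fun i => v i τ) atTop (nhds (yl τ)) := by
    refine bc_ae_tendsto v yl (fun i => ((hvm i).sub hylm).norm.aemeasurable) (fun i => ?_)
    rw [← ofReal_integral_eq_lintegral_ofReal (hvint i)
      (Eventually.of_forall fun t => sq_nonneg _)]
    exact ENNReal.ofReal_le_ofReal (hvdist i).le
  -- truncation functions
  set hcut : ℕ → ℕ → ℝ → ℝ := fun j n τ => if (2:ℝ) ^ j < ‖y n τ‖ then ‖y n τ‖ else 0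
    with hhcut
  have hcut_meas : ∀ j n, AEMeasurable (hcut j n) μ := by
    intro j n
    have heq : hcut j n = (fun s : ℝ => if (2:ℝ) ^ j < s then s else 0) ∘ (fun τ => ‖y n τ‖) :=
      rfl
    rw [heq]
    exact (Measurable.ite (measurableSet_lt measurable_const measurable_id)
      measurable_id measurable_const).comp_aemeasurable (hym n).norm.aemeasurable
  have hcut_nonneg : ∀ j n τ, 0 ≤ hcut j n τ := by
    intro j n τ
    simp only [hhcut]
    split
    · exact norm_nonneg _
    · exact le_refl 0
  have hcut_le : ∀ j n τ, hcut j n τ ≤ ‖y n τ‖ ^ 2 / 2 ^ j := by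
    intro j n τ
    simp only [hhcut]
    split
    · rename_i hlt
      rw [le_div_iff₀ (by positivity : (0:ℝ) < 2 ^ j)]
      nlinarith [norm_nonneg (y n τ)]
    · positivity
  have hcut_int : ∀ j n, Integrable (hcut j n) μ := by
    intro j n
    refine Integrable.mono' ((hy2 n).div_const ((2:ℝ) ^ j))
      (aestronglyMeasurable_iff_aemeasurable.2 (hcut_meas j n)) ?_
    refine Eventually.of_forall fun τ => ?_
    rw [Real.norm_eq_abs, abs_of_nonneg (hcut_nonneg j n τ)]
    exact hcut_le j n τ
  have hcut_intle : ∀ j n, ∫ τ, hcut j n τ ∂μ ≤ C / 2 ^ j := by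
    intro j n
    calc ∫ τ, hcut j n τ ∂μ ≤ ∫ τ, ‖y n τ‖ ^ 2 / 2 ^ j ∂μ :=
          integral_mono (hcut_int j n) ((hy2 n).div_const _) (hcut_le j n)
      _ = (∫ τ, ‖y n τ‖ ^ 2 ∂μ) / 2 ^ j := integral_div _ _
      _ ≤ C / 2 ^ j := by gcongr; exact hC n
  -- weighted truncation sums
  set g : ℕ → ℕ → ℝ → ℝ := fun j i τ => ∑ l ∈ Finset.range (Nc i),
    wc i l * hcut j (φ₀ (kc i l)) τ with hgdef
  have hg_nonneg : ∀ j i τ, 0 ≤ g j i τ := fun j i τ =>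
    Finset.sum_nonneg fun l _ => mul_nonneg (hwc0 i l) (hcut_nonneg _ _ _)
  have hg_meas : ∀ j i, AEMeasurable (g j i) μ := fun j i =>
    Finset.aemeasurable_fun_sum _ (fun l _ => (hcut_meas j (φ₀ (kc i l))).const_mul (wc i l))
  have hg_int : ∀ j i, Integrable (g j i) μ := fun j i =>
    integrable_finset_sum _ (fun l _ => (hcut_int j (φ₀ (kc i l))).const_mul (wc i l))
  have hg_intle : ∀ j i, ∫ τ, g j i τ ∂μ ≤ C / 2 ^ j := by
    intro j i
    rw [show (∫ τ, g j i τ ∂μ) = ∫ τ, ∑ l ∈ Finset.range (Nc i),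
        wc i l * hcut j (φ₀ (kc i l)) τ ∂μ from rfl,
      integral_finset_sum _ (fun l _ => (hcut_int j (φ₀ (kc i l))).const_mul (wc i l))]
    calc ∑ l ∈ Finset.range (Nc i), ∫ τ, wc i l * hcut j (φ₀ (kc i l)) τ ∂μ
        = ∑ l ∈ Finset.range (Nc i), wc i l * ∫ τ, hcut j (φ₀ (kc i l)) τ ∂μ :=
          Finset.sum_congr rfl fun l _ => integral_const_mul _ _
      _ ≤ ∑ l ∈ Finset.range (Nc i), wc i l * (C / 2 ^ j) :=
          Finset.sum_le_sum fun l _ =>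
            mul_le_mul_of_nonneg_left (hcut_intle _ _) (hwc0 i l)
      _ = C / 2 ^ j := by rw [← Finset.sum_mul, hwc1 i, one_mul]
  -- liminf of truncation sums
  set G : ℕ → ℝ → ℝ≥0∞ := fun j τ => liminf (fun i => ENNReal.ofReal (g j i τ)) atTop
    with hGdef
  have hG_meas : ∀ j, AEMeasurable (G j) μ := fun j =>
    aemeas_liminf'' (fun i => ENNReal.measurable_ofReal.comp_aemeasurable (hg_meas j i))
  have hG_intle : ∀ j, ∫⁻ τ, G j τ ∂μ ≤ ENNReal.ofReal (C / 2 ^ j) := by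
    intro j
    refine le_trans (lintegral_liminf_le'
      (fun i => ENNReal.measurable_ofReal.comp_aemeasurable (hg_meas j i))) ?_
    refine liminf_le_of_frequently_le (Frequently.of_forall fun i => ?_)
    rw [← ofReal_integral_eq_lintegral_ofReal (hg_int j i)
      (Eventually.of_forall (hg_nonneg j i))]
    exact ENNReal.ofReal_le_ofReal (hg_intle j i)
  have hG_tendsto : ∀ᵐ τ ∂μ, Tendsto (fun j => G j τ) atTop (nhds 0) := by
    have hsum : ∑' j, ∫⁻ τ, G j τ ∂μ ≠ ⊤ := by
      refine ne_top_of_le_ne_top ?_ (ENNReal.tsum_le_tsum fun j => hG_intle j)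
      have heq2 : ∀ j : ℕ, ENNReal.ofReal (C / 2 ^ j)
          = ENNReal.ofReal C * (ENNReal.ofReal (1/2)) ^ j := by
        intro j
        rw [show C / 2 ^ j = C * (1/2 : ℝ) ^ j by rw [one_div, inv_pow]; ring,
          ENNReal.ofReal_mul hC0, ENNReal.ofReal_pow (by norm_num)]
      simp_rw [heq2]
      rw [ENNReal.tsum_mul_left]
      refine ENNReal.mul_ne_top ENNReal.ofReal_ne_top ?_
      rw [ENNReal.tsum_geometric]
      have hlt : (ENNReal.ofReal (1/2)) < 1 := by
        rw [show (1 : ℝ≥0∞) = ENNReal.ofReal 1 by simp]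
        exact (ENNReal.ofReal_lt_ofReal_iff (by norm_num)).2 (by norm_num)
      simp only [ne_eq, ENNReal.inv_eq_top, tsub_eq_zero_iff_le]
      exact fun hcon => absurd hcon (not_le.2 hlt)
    have hae2 : ∀ᵐ τ ∂μ, (∑' j, G j τ) < ⊤ := by
      refine ae_lt_top' (AEMeasurable.ennreal_tsum hG_meas) ?_
      rw [lintegral_tsum hG_meas]; exact hsum
    filter_upwards [hae2] with τ hτ
    exact ENNReal.tendsto_atTop_zero_of_tsum_ne_top hτ.ne
  -- a.e. finiteness of liminf of norms
  have hLm : ∀ kk : ℕ, AEMeasurable (fun τ => ENNReal.ofReal (‖y (φ₀ kk) τ‖ ^ 2)) μ :=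
    fun kk => ENNReal.measurable_ofReal.comp_aemeasurable
      (((hym (φ₀ kk)).norm.aemeasurable).pow_const 2)
  have hLfin : ∀ᵐ τ ∂μ,
      liminf (fun kk => ENNReal.ofReal (‖y (φ₀ kk) τ‖ ^ 2)) atTop < ⊤ := by
    refine ae_lt_top' (aemeas_liminf'' hLm)
      (ne_top_of_le_ne_top (@ENNReal.ofReal_ne_top C) ?_)
    refine le_trans (lintegral_liminf_le' hLm) ?_
    refine liminf_le_of_frequently_le (Frequently.of_forall fun kk => ?_)
    rw [← ofReal_integral_eq_lintegral_ofReal (hy2 (φ₀ kk))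
      (Eventually.of_forall fun τ => sq_nonneg _)]
    exact ENNReal.ofReal_le_ofReal (hC (φ₀ kk))
  have hincl' : ∀ᵐ τ ∂μ, ∀ n, y n τ ∈ S n (x n τ) := ae_all_iff.2 hincl
  -- pointwise argument
  filter_upwards [hxae, hvae, hG_tendsto, hLfin, hincl'] with τ hxτ hvτ hGτ hLτ hinclτ
  have hclu : ∀ (P : ℕ → Prop) (B : ℝ), (∀ m, ∃ kk, m ≤ kk ∧ P kk) →
      (∀ kk, P kk → ‖y (φ₀ kk) τ‖ ≤ B) →
      ∃ z ∈ Sinf (xl τ), ∃ ρ : ℕ → ℕ, StrictMono ρ ∧ (∀ n, P (ρ n)) ∧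
        ∀ w : H, Tendsto (fun n => ⟪y (φ₀ (ρ n)) τ, w⟫) atTop (nhds ⟪z, w⟫) := by
    intro P B hfreq hbound
    obtain ⟨τ₁, hτ₁, hτ₁P⟩ := extraction_of_frequently_atTop
      (frequently_atTop.2 (fun m => (hfreq m).imp fun kk hkk => ⟨hkk.1, hkk.2⟩))
    obtain ⟨σ1, z, hσ1, hzconv⟩ := weak_seq_compact (fun n => y (φ₀ (τ₁ n)) τ) B
      (fun n => hbound _ (hτ₁P n))
    refine ⟨z, ?_, τ₁ ∘ σ1, hτ₁.comp hσ1, fun n => hτ₁P (σ1 n), fun w => hzconv w⟩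
    exact hstatic (fun n => φ₀ (τ₁ (σ1 n))) (hφ₀.comp (hτ₁.comp hσ1))
      (fun n => x (φ₀ (τ₁ (σ1 n))) τ) (fun n => y (φ₀ (τ₁ (σ1 n))) τ) (xl τ) z
      (fun n => hinclτ (φ₀ (τ₁ (σ1 n))))
      (hxτ.comp ((hτ₁.comp hσ1).tendsto_atTop))
      (fun w => hzconv w)
  -- Sinf (xl τ) is nonempty
  set L0 : ℝ≥0∞ := liminf (fun kk => ENNReal.ofReal (‖y (φ₀ kk) τ‖ ^ 2)) atTop with hL0def
  have hne : (Sinf (xl τ)).Nonempty := by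
    have hfreq : ∀ m, ∃ kk, m ≤ kk ∧ ‖y (φ₀ kk) τ‖ ≤ Real.sqrt (L0.toReal + 1) := by
      have h1 : ∃ᶠ kk in atTop, ENNReal.ofReal (‖y (φ₀ kk) τ‖ ^ 2) < L0 + 1 :=
        frequently_lt_of_liminf_lt (by isBoundedDefault)
          (ENNReal.lt_add_right hLτ.ne one_ne_zero)
      intro m
      obtain ⟨kk, hkkm, hkk⟩ := frequently_atTop.1 h1 m
      refine ⟨kk, hkkm, ?_⟩
      have hne2 : L0 + 1 ≠ ⊤ := (ENNReal.add_lt_top.2 ⟨hLτ, ENNReal.one_lt_top⟩).ne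
      have h3 := ENNReal.toReal_mono hne2 hkk.le
      rw [ENNReal.toReal_ofReal (sq_nonneg _), ENNReal.toReal_add hLτ.ne (by simp)] at h3
      simp only [ENNReal.toReal_one] at h3
      exact (Real.le_sqrt (norm_nonneg _) (by positivity)).2 h3
    obtain ⟨z, hz, -⟩ := hclu _ _ hfreq (fun kk hk => hk)
    exact ⟨z, hz⟩
  -- separation argument
  by_contra hnot
  obtain ⟨f, u, hfu, hub⟩ := geometric_hahn_banach_point_closed (hconv (xl τ))
    (hclosed (xl τ)) hnot
  set c₀ : ℝ := u - f (yl τ) with hc₀def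
  have hc₀ : 0 < c₀ := sub_pos.2 hfu
  set M : ℝ := ‖f‖ with hM
  have hM0 : 0 ≤ M := norm_nonneg f
  set wf : H := (InnerProductSpace.toDual ℝ H).symm f with hwfdef
  have hfwf : ∀ h : H, f h = ⟪h, wf⟫ := by
    intro h
    have h2 : (InnerProductSpace.toDual ℝ H) wf = f :=
      (InnerProductSpace.toDual ℝ H).apply_symm_apply f
    have h1 : ((InnerProductSpace.toDual ℝ H) wf) h = inner ℝ wf h :=
      InnerProductSpace.toDual_apply_apply
    rw [h2] at h1
    rw [h1, real_inner_comm]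
  set η : ℝ := c₀ / (8 * (M + |u| + c₀ + 1)) with hηdef
  have hden : 0 < 8 * (M + |u| + c₀ + 1) := by
    have := abs_nonneg u
    nlinarith
  have hη : 0 < η := div_pos hc₀ hden
  have hkey : ∃ B : ℝ, ∀ m, ∃ kk, m ≤ kk ∧
      (‖y (φ₀ kk) τ‖ ≤ B ∧ f (y (φ₀ kk) τ) ≤ u - c₀ / 2) := by
    by_contra hno
    push_neg at hno
    obtain ⟨j₀, hj₀⟩ := (hGτ.eventually_lt_const (ENNReal.ofReal_pos.2 hη)).exists
    set B : ℝ := (2:ℝ) ^ j₀ with hBdef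
    have hB1 : (1:ℝ) ≤ B := one_le_pow₀ (by norm_num)
    obtain ⟨m₁, hm₁⟩ := hno B
    have hj₀' : liminf (fun i => ENNReal.ofReal (g j₀ i τ)) atTop < ENNReal.ofReal η := hj₀
    have hfreq2 : ∃ᶠ i in atTop, ENNReal.ofReal (g j₀ i τ) < ENNReal.ofReal η :=
      frequently_lt_of_liminf_lt (by isBoundedDefault) hj₀'
    have hev2 : ∀ᶠ i in atTop, ‖v i τ - yl τ‖ < η ∧ m₁ ≤ i := by
      refine Eventually.and ?_ (eventually_ge_atTop m₁)
      exact (tendsto_iff_norm_sub_tendsto_zero.1 hvτ).eventually_lt_const hη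
    obtain ⟨i, hgi, hvi, hmi⟩ := (hfreq2.and_eventually hev2).exists
    have hgi' : g j₀ i τ < η := (ENNReal.ofReal_lt_ofReal_iff hη).1 hgi
    set F1 : Finset ℕ := (Finset.range (Nc i)).filter
      (fun l => f (y (φ₀ (kc i l)) τ) ≤ u - c₀ / 2) with hF1
    set F2 : Finset ℕ := (Finset.range (Nc i)).filter
      (fun l => ¬(f (y (φ₀ (kc i l)) τ) ≤ u - c₀ / 2)) with hF2
    have hF1big : ∀ l ∈ F1, B < ‖y (φ₀ (kc i l)) τ‖ := by
      intro l hl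
      obtain ⟨hlr, hlf⟩ := Finset.mem_filter.1 hl
      by_contra hle
      push_neg at hle
      exact absurd hlf (not_le.2
        (hm₁ (kc i l) (le_trans hmi (hkc i l (Finset.mem_range.1 hlr))) hle))
    have hF1sum : ∑ l ∈ F1, wc i l * ‖y (φ₀ (kc i l)) τ‖ ≤ g j₀ i τ := by
      have h7 : ∑ l ∈ F1, wc i l * ‖y (φ₀ (kc i l)) τ‖
          = ∑ l ∈ F1, wc i l * hcut j₀ (φ₀ (kc i l)) τ := by
        refine Finset.sum_congr rfl fun l hl => ?_
        congr 1
        simp only [hhcut]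
        rw [if_pos (hF1big l hl)]
      rw [h7]
      exact Finset.sum_le_sum_of_subset_of_nonneg (Finset.filter_subset _ _)
        (fun l _ _ => mul_nonneg (hwc0 i l) (hcut_nonneg _ _ _))
    set s1 : ℝ := ∑ l ∈ F1, wc i l with hs1def
    have hs10 : 0 ≤ s1 := Finset.sum_nonneg fun l _ => hwc0 i l
    have hs1B : s1 * B ≤ η := by
      have h8 : s1 * B = ∑ l ∈ F1, wc i l * B := by rw [hs1def, Finset.sum_mul]
      rw [h8]
      refine le_trans (Finset.sum_le_sum fun l hl => ?_) (le_trans hF1sum hgi'.le)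
      exact mul_le_mul_of_nonneg_left (hF1big l hl).le (hwc0 i l)
    have hs1η : s1 ≤ η := by nlinarith
    have hfp : f (v i τ) = ∑ l ∈ Finset.range (Nc i),
        wc i l * f (y (φ₀ (kc i l)) τ) := by
      rw [show v i τ = ∑ l ∈ Finset.range (Nc i), wc i l • y (φ₀ (kc i l)) τ from rfl,
        map_sum]
      refine Finset.sum_congr rfl fun l _ => ?_
      rw [_root_.map_smul, smul_eq_mul]
    have hsplitf : f (v i τ) = (∑ l ∈ F1, wc i l * f (y (φ₀ (kc i l)) τ))
        + ∑ l ∈ F2, wc i l * f (y (φ₀ (kc i l)) τ) := by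
      rw [hfp]
      exact (Finset.sum_filter_add_sum_filter_not _ _ _).symm
    have hs2 : s1 + ∑ l ∈ F2, wc i l = 1 := by
      rw [hs1def]
      rw [show (1:ℝ) = ∑ l ∈ Finset.range (Nc i), wc i l from (hwc1 i).symm]
      exact Finset.sum_filter_add_sum_filter_not _ _ _
    have hb1abs : |∑ l ∈ F1, wc i l * f (y (φ₀ (kc i l)) τ)| ≤ M * η := by
      refine le_trans (Finset.abs_sum_le_sum_abs _ _) ?_
      have h9 : ∀ l ∈ F1, |wc i l * f (y (φ₀ (kc i l)) τ)|
          ≤ M * (wc i l * ‖y (φ₀ (kc i l)) τ‖) := by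
        intro l hl
        rw [abs_mul, abs_of_nonneg (hwc0 i l)]
        have h10 : |f (y (φ₀ (kc i l)) τ)| ≤ M * ‖y (φ₀ (kc i l)) τ‖ := by
          have := f.le_opNorm (y (φ₀ (kc i l)) τ)
          rwa [Real.norm_eq_abs] at this
        calc wc i l * |f (y (φ₀ (kc i l)) τ)|
            ≤ wc i l * (M * ‖y (φ₀ (kc i l)) τ‖) :=
              mul_le_mul_of_nonneg_left h10 (hwc0 i l)
          _ = M * (wc i l * ‖y (φ₀ (kc i l)) τ‖) := by ring
      refine le_trans (Finset.sum_le_sum h9) ?_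
      rw [← Finset.mul_sum]
      exact mul_le_mul_of_nonneg_left (le_trans hF1sum hgi'.le) hM0
    have hb2 : (1 - s1) * (u - c₀/2) ≤ ∑ l ∈ F2, wc i l * f (y (φ₀ (kc i l)) τ) := by
      have h21 : (1 - s1) * (u - c₀/2) = ∑ l ∈ F2, wc i l * (u - c₀/2) := by
        rw [← Finset.sum_mul]
        congr 1
        linarith [hs2]
      rw [h21]
      refine Finset.sum_le_sum fun l hl => ?_
      have hlf := (Finset.mem_filter.1 hl).2
      push_neg at hlf
      exact mul_le_mul_of_nonneg_left hlf.le (hwc0 i l)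
    have hup : f (v i τ) ≤ (u - c₀) + M * η := by
      have h13 : f (v i τ) - f (yl τ) = f (v i τ - yl τ) := (map_sub f _ _).symm
      have h14 : |f (v i τ - yl τ)| ≤ M * ‖v i τ - yl τ‖ := by
        have := f.le_opNorm (v i τ - yl τ)
        rwa [Real.norm_eq_abs] at this
      have h15 : M * ‖v i τ - yl τ‖ ≤ M * η := mul_le_mul_of_nonneg_left hvi.le hM0
      have h16 : f (yl τ) = u - c₀ := by rw [hc₀def]; ring
      nlinarith [le_abs_self (f (v i τ - yl τ))]
    have habs : |u - c₀/2| ≤ |u| + c₀ := by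
      refine le_trans (abs_sub _ _) ?_
      rw [abs_of_pos (by linarith : (0:ℝ) < c₀/2)]
      linarith
    have hlow : -(M*η) + ((u - c₀/2) - η * (|u| + c₀)) ≤ f (v i τ) := by
      have h17 : (u - c₀/2) - η * (|u| + c₀) ≤ (1 - s1) * (u - c₀/2) := by
        have h18 : s1 * (u - c₀/2) ≤ s1 * |u - c₀/2| :=
          mul_le_mul_of_nonneg_left (le_abs_self _) hs10
        have h19 : s1 * |u - c₀/2| ≤ η * (|u| + c₀) :=
          mul_le_mul hs1η habs (abs_nonneg _) hη.le
        nlinarith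
      have h20 := neg_abs_le (∑ l ∈ F1, wc i l * f (y (φ₀ (kc i l)) τ))
      linarith [hsplitf, hb2, hb1abs]
    have hηeq : η * (8 * (M + |u| + c₀ + 1)) = c₀ := by
      rw [hηdef]
      field_simp
    have hηbound : M * η + M * η + η * (|u| + c₀) < c₀ / 2 := by
      nlinarith [mul_pos hη hc₀, mul_nonneg hη.le hM0,
        mul_nonneg hη.le (abs_nonneg u), hη]
    linarith [hup, hlow]
  obtain ⟨B, hB⟩ := hkey
  obtain ⟨z, hz, ρ, hρ, hρP, hzconv⟩ := hclu _ B hB (fun kk hk => hk.1)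
  have h1 : Tendsto (fun n => f (y (φ₀ (ρ n)) τ)) atTop (nhds (f z)) := by
    have h0 := hzconv wf
    have he : (fun n => ⟪y (φ₀ (ρ n)) τ, wf⟫) = fun n => f (y (φ₀ (ρ n)) τ) := by
      funext n; rw [hfwf]
    rw [he, ← hfwf z] at h0
    exact h0
  have h2 : f z ≤ u - c₀/2 := le_of_tendsto h1 (Eventually.of_forall fun n => (hρP n).2)
  have h3 := hub z hz
  linarith
end
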